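/- Lemma (maximal deviation inequality for the embedded chain of the logistic branching process). Under the standing assumptions, let η > 0 be the constant from the drift-sign lemma (so that the one-step drift of the embedded chain points towards μ_N outside the window [μ_N − η σ_N, μ_N + η σ_N]). Let λ > 2η and η' > λ. Then there exists N₀ ∈ ℕ such that for all N ≥ N₀, every starting state x ∈ [μ_N − λ σ_N, μ_N + λ σ_N] ∩ ℕ and every n ∈ ℕ, any discrete-time Markov chain (M_k)_{k≥0} with transition kernel p_N and M_0 = x satisfies P_x( max_{0 ≤ k ≤ n} |M_k − μ_N| > η' σ_N ) ≤ (2 v² / (η' − λ)²) · n / σ_N². -/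

import Mathlib

set_option linter.unusedSectionVars false
set_option linter.unnecessarySimpa false
set_option linter.unnecessarySeqFocus false
set_option maxHeartbeats 1000000

open Filter MeasureTheory

namespace LogisticAux

open scoped ENNReal

lemma master_hasSum (p : ℕ → ℝ) (π : ℕ → ℝ) (y : ℕ) (q r : ℝ)
    (hdown : p (y - 1) = q)
    (hup : ∀ j : ℕ, p (y + 1 + j) = r * π (j + 1))
    (hother : ∀ z : ℕ, z ≠ y - 1 → ¬ y < z → p z = 0)
    (f : ℕ → ℝ) (b : ℝ) (hb : HasSum (fun j => π (j + 1) * f (y + 1 + j)) b) :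
    HasSum (fun z => p z * f z) (q * f (y - 1) + r * b) := by
  classical
  have hpt : ∀ z : ℕ, p z * f z =
      (if z = y - 1 then p z * f z else 0) + (if z = y - 1 then 0 else p z * f z) := by
    intro z; by_cases hz : z = y - 1 <;> simp [hz]
  have h1 : HasSum (fun z : ℕ => if z = y - 1 then p z * f z else 0) (q * f (y - 1)) := by
    have := hasSum_single (f := fun z : ℕ => if z = y - 1 then p z * f z else 0) (y - 1)
      (by intro b' hb'; simp [hb'])
    simpa [hdown] using this
  have h2 : HasSum (fun z : ℕ => if z = y - 1 then 0 else p z * f z) (r * b) := by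
    have hinj : Function.Injective (fun j : ℕ => y + 1 + j) := by
      intro a b hab; simpa using hab
    have hout : ∀ z ∉ Set.range (fun j : ℕ => y + 1 + j),
        (if z = y - 1 then 0 else p z * f z) = 0 := by
      intro z hz
      by_cases hz1 : z = y - 1
      · simp [hz1]
      · have h2' : ¬ y < z := by
          intro hcon
          exact hz ⟨z - y - 1, show y + 1 + (z - y - 1) = z by omega⟩
        simp [hz1, hother z hz1 h2']
    rw [← Function.Injective.hasSum_iff hinj hout]
    have heq : ((fun z : ℕ => if z = y - 1 then 0 else p z * f z) ∘ (fun j : ℕ => y + 1 + j))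
        = fun j : ℕ => r * (π (j + 1) * f (y + 1 + j)) := by
      funext j
      have hne : y + 1 + j ≠ y - 1 := by omega
      simp [Function.comp, hne, hup j]; ring
    rw [heq]
    exact hb.mul_left r
  have hfe : (fun z : ℕ => p z * f z)
      = fun z => (if z = y - 1 then p z * f z else 0) + (if z = y - 1 then 0 else p z * f z) :=
    funext hpt
  rw [hfe]
  exact h1.add h2


lemma key_core (p : ℕ → ℝ) (W : ℕ → ℝ) (l : ℕ) (v2 dr S2 co : ℝ)
    (hpnn : ∀ z, 0 ≤ p z) (hWnn : ∀ z, 0 ≤ W z)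
    (h1 : HasSum p 1)
    (hZ : HasSum (fun z : ℕ => p z * ((z : ℝ) - l)) dr)
    (hQ2 : HasSum (fun z : ℕ => p z * ((z : ℝ) - l) ^ 2) S2)
    (hS2 : S2 ≤ v2)
    (hco : co * dr ≤ 0)
    (hW : ∀ z : ℕ, W z ≤ W l + co * ((z : ℝ) - l) + ((z : ℝ) - l) ^ 2) :
    Summable (fun z : ℕ => p z * W z) ∧ (∑' z : ℕ, p z * W z) ≤ W l + v2 := by
  have hfe : (fun z : ℕ => W l * p z + co * (p z * ((z : ℝ) - l)) + p z * ((z : ℝ) - l) ^ 2)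
      = fun z : ℕ => p z * (W l + co * ((z : ℝ) - l) + ((z : ℝ) - l) ^ 2) := by
    funext z; ring
  have hquad : HasSum (fun z : ℕ => p z * (W l + co * ((z : ℝ) - l) + ((z : ℝ) - l) ^ 2))
      ((W l * 1 + co * dr) + S2) := by
    have h := ((h1.mul_left (W l)).add (hZ.mul_left co)).add hQ2
    rwa [hfe] at h
  have hle : ∀ z : ℕ, p z * W z ≤ p z * (W l + co * ((z : ℝ) - l) + ((z : ℝ) - l) ^ 2) :=
    fun z => mul_le_mul_of_nonneg_left (hW z) (hpnn z)
  have hsumm : Summable (fun z : ℕ => p z * W z) :=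
    Summable.of_nonneg_of_le (fun z => mul_nonneg (hpnn z) (hWnn z)) hle hquad.summable
  refine ⟨hsumm, ?_⟩
  calc (∑' z : ℕ, p z * W z)
      ≤ ∑' z : ℕ, p z * (W l + co * ((z : ℝ) - l) + ((z : ℝ) - l) ^ 2) :=
        Summable.tsum_le_tsum hle hsumm hquad.summable
    _ = (W l * 1 + co * dr) + S2 := hquad.tsum_eq
    _ ≤ W l + v2 := by linarith


noncomputable def WF (mN ls : ℝ) (z : ℕ) : ℝ := (max (|(z : ℝ) - mN| - ls) 0) ^ 2

lemma WF_nonneg (mN ls : ℝ) (z : ℕ) : 0 ≤ WF mN ls z := by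
  unfold WF; positivity

lemma WF_le (m ls : ℝ) (z : ℕ) (u : ℝ) (hu : |(z : ℝ) - m| - ls ≤ |(z : ℝ) - u|) :
    WF m ls z ≤ ((z : ℝ) - u) ^ 2 := by
  have h0 : max (|(z : ℝ) - m| - ls) 0 ≤ |(z : ℝ) - u| := max_le hu (abs_nonneg _)
  calc WF m ls z = (max (|(z : ℝ) - m| - ls) 0) ^ 2 := rfl
    _ ≤ |(z : ℝ) - u| ^ 2 := pow_le_pow_left₀ (le_max_right _ _) h0 2
    _ = ((z : ℝ) - u) ^ 2 := sq_abs _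

lemma WF_inside (m ls : ℝ) (x : ℕ) (habs : |(x : ℝ) - m| ≤ ls) : WF m ls x = 0 := by
  unfold WF
  rw [max_eq_right (by linarith), zero_pow (by norm_num)]

lemma WF_above (m ls : ℝ) (hls : 0 ≤ ls) (l : ℕ) (hg : 0 ≤ (l : ℝ) - m - ls) :
    WF m ls l = ((l : ℝ) - m - ls) ^ 2 := by
  unfold WF
  rw [abs_of_nonneg (by linarith : (0:ℝ) ≤ (l : ℝ) - m), max_eq_left (by linarith)]

lemma WF_below (m ls : ℝ) (hls : 0 ≤ ls) (l : ℕ) (hg : 0 ≤ m - ls - l) :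
    WF m ls l = (m - ls - (l : ℝ)) ^ 2 := by
  unfold WF
  rw [abs_of_nonpos (by linarith : (l : ℝ) - m ≤ 0), max_eq_left (by linarith)]
  ring

lemma WF_ge (m ls : ℝ) (y : ℕ) (t : ℝ) (ht : 0 ≤ t) (hy : t ≤ |(y : ℝ) - m| - ls) :
    t ^ 2 ≤ WF m ls y := by
  unfold WF
  exact pow_le_pow_left₀ ht (le_trans hy (le_max_left _ _)) 2



variable {Ω : Type} [MeasurableSpace Ω]

def cylSet (M : ℕ → Ω → ℕ) (k : ℕ) (hist : Fin (k + 1) → ℕ) : Set Ω :=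
  {ω | ∀ i : Fin (k + 1), M i.val ω = hist i}

lemma cylSet_measurable {M : ℕ → Ω → ℕ} (hM : ∀ k, Measurable (M k)) (k : ℕ)
    (hist : Fin (k + 1) → ℕ) : MeasurableSet (cylSet M k hist) := by
  have : cylSet M k hist = ⋂ i : Fin (k + 1), (M i.val) ⁻¹' {hist i} := by
    ext ω; simp [cylSet, Set.mem_iInter]
  rw [this]
  exact MeasurableSet.iInter fun i => (hM i.val) (measurableSet_singleton _)

lemma cylSet_snoc (M : ℕ → Ω → ℕ) (k : ℕ) (hist : Fin (k + 1) → ℕ) (y : ℕ) :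
    cylSet M (k + 1) (Fin.snoc hist y)
      = {ω | (∀ i : Fin (k + 1), M i.val ω = hist i) ∧ M (k + 1) ω = y} := by
  ext ω
  constructor
  · intro hω
    refine ⟨fun i => ?_, ?_⟩
    · have := hω i.castSucc
      rwa [Fin.snoc_castSucc] at this
    · have := hω (Fin.last (k + 1))
      rwa [Fin.snoc_last] at this
  · rintro ⟨h1, h2⟩ i
    refine Fin.lastCases ?_ ?_ i
    · rw [Fin.snoc_last]; exact h2
    · intro j; rw [Fin.snoc_castSucc]; exact h1 j

lemma cylSet_disjoint (M : ℕ → Ω → ℕ) (k : ℕ) :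
    Pairwise (Function.onFun Disjoint (cylSet M k)) := by
  intro h1 h2 hne
  rw [Function.onFun, Set.disjoint_left]
  intro ω hω1 hω2
  exact hne (funext fun i => (hω1 i).symm.trans (hω2 i))

def aliveP (Bad : ℕ → Prop) (x : ℕ) {k : ℕ} (hist : Fin (k + 1) → ℕ) : Prop :=
  hist 0 = x ∧ ∀ i, ¬ Bad (hist i)

def exitP (Bad : ℕ → Prop) (x : ℕ) {k : ℕ} (hist : Fin (k + 1) → ℕ) : Prop :=
  hist 0 = x ∧ (∀ i : Fin (k + 1), (i : ℕ) < k → ¬ Bad (hist i)) ∧ Bad (hist (Fin.last k))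

open Classical in
noncomputable def AS (P : Measure Ω) (M : ℕ → Ω → ℕ) (WE : ℕ → ℝ≥0∞)
    (Bad : ℕ → Prop) (x : ℕ) (k : ℕ) : ℝ≥0∞ :=
  ∑' hist : Fin (k + 1) → ℕ,
    (if aliveP Bad x hist then P (cylSet M k hist) * WE (hist (Fin.last k)) else 0)

open Classical in
noncomputable def MS (P : Measure Ω) (M : ℕ → Ω → ℕ)
    (Bad : ℕ → Prop) (x : ℕ) (k : ℕ) : ℝ≥0∞ :=
  ∑' hist : Fin (k + 1) → ℕ, (if aliveP Bad x hist then P (cylSet M k hist) else 0)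

open Classical in
noncomputable def ES (P : Measure Ω) (M : ℕ → Ω → ℕ)
    (Bad : ℕ → Prop) (x : ℕ) (k : ℕ) : ℝ≥0∞ :=
  ∑' hist : Fin (k + 1) → ℕ, (if exitP Bad x hist then P (cylSet M k hist) else 0)

lemma snoc_alive_iff (Bad : ℕ → Prop) (x : ℕ) {k : ℕ} (hist : Fin (k + 1) → ℕ) (y : ℕ) :
    aliveP Bad x (Fin.snoc hist y) ↔ aliveP Bad x hist ∧ ¬ Bad y := by
  constructor
  · rintro ⟨h0, hall⟩
    have h0' : hist 0 = x := by
      rw [← Fin.castSucc_zero] at h0; rwa [Fin.snoc_castSucc] at h0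
    refine ⟨⟨h0', fun i => ?_⟩, ?_⟩
    · have := hall i.castSucc; rwa [Fin.snoc_castSucc] at this
    · have := hall (Fin.last (k + 1)); rwa [Fin.snoc_last] at this
  · rintro ⟨⟨h0, hall⟩, hy⟩
    constructor
    · rw [← Fin.castSucc_zero, Fin.snoc_castSucc]; exact h0
    · intro i
      refine Fin.lastCases ?_ ?_ i
      · rwa [Fin.snoc_last]
      · intro j; rw [Fin.snoc_castSucc]; exact hall j

lemma snoc_exit_iff (Bad : ℕ → Prop) (x : ℕ) {k : ℕ} (hist : Fin (k + 1) → ℕ) (y : ℕ) :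
    exitP Bad x (Fin.snoc hist y) ↔ aliveP Bad x hist ∧ Bad y := by
  constructor
  · rintro ⟨h0, hall, hlast⟩
    have h0' : hist 0 = x := by
      rw [← Fin.castSucc_zero] at h0; rwa [Fin.snoc_castSucc] at h0
    refine ⟨⟨h0', fun i => ?_⟩, ?_⟩
    · have := hall i.castSucc (by simpa using i.isLt)
      rwa [Fin.snoc_castSucc] at this
    · rwa [Fin.snoc_last] at hlast
  · rintro ⟨⟨h0, hall⟩, hy⟩
    refine ⟨?_, fun i hi => ?_, ?_⟩
    · rw [← Fin.castSucc_zero, Fin.snoc_castSucc]; exact h0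
    · have hi' : i ≠ Fin.last (k + 1) := by
        intro hcon; rw [hcon] at hi; simp at hi
      rcases Fin.exists_castSucc_eq.mpr hi' with ⟨j, rfl⟩
      rw [Fin.snoc_castSucc]; exact hall j
    · rwa [Fin.snoc_last]


def snocEquiv (k : ℕ) : ((Fin (k + 1) → ℕ) × ℕ) ≃ (Fin (k + 2) → ℕ) where
  toFun q := Fin.snoc q.1 q.2
  invFun h := (Fin.init h, h (Fin.last (k + 1)))
  left_inv q := by simp [Fin.init_snoc]
  right_inv h := by simp [Fin.snoc_init_self]

lemma step_ineq (P : Measure Ω) (M : ℕ → Ω → ℕ) (pE : ℕ → ℕ → ℝ≥0∞) (WE : ℕ → ℝ≥0∞)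
    (Bad : ℕ → Prop) (x : ℕ) (aE v2E : ℝ≥0∞)
    (hkey : ∀ l, (∑' z : ℕ, pE l z * WE z) ≤ WE l + v2E)
    (hbadW : ∀ y, Bad y → aE ≤ WE y)
    (hMarkov : ∀ (k : ℕ) (hist : Fin (k + 1) → ℕ) (y : ℕ),
      P {ω | (∀ i : Fin (k + 1), M i.val ω = hist i) ∧ M (k + 1) ω = y}
        = pE (hist (Fin.last k)) y * P {ω | ∀ i : Fin (k + 1), M i.val ω = hist i})
    (k : ℕ) :
    AS P M WE Bad x (k + 1) + aE * ES P M Bad x (k + 1)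
      ≤ AS P M WE Bad x k + v2E * MS P M Bad x k := by
  classical
  have hQsnoc : ∀ (hist : Fin (k + 1) → ℕ) (y : ℕ),
      P (cylSet M (k + 1) (Fin.snoc hist y))
        = pE (hist (Fin.last k)) y * P (cylSet M k hist) := by
    intro hist y
    rw [cylSet_snoc]
    exact hMarkov k hist y
  have hA : AS P M WE Bad x (k + 1)
      = ∑' hist : Fin (k + 1) → ℕ, (if aliveP Bad x hist then P (cylSet M k hist) else 0)
          * ∑' y : ℕ, (if Bad y then 0 else pE (hist (Fin.last k)) y * WE y) := by
    rw [AS, ← Equiv.tsum_eq (snocEquiv k), ENNReal.tsum_prod']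
    congr 1; funext hist
    rw [← ENNReal.tsum_mul_left]
    congr 1; funext y
    show (if aliveP Bad x (Fin.snoc hist y : Fin (k + 2) → ℕ) then
        P (cylSet M (k + 1) (Fin.snoc hist y)) * WE ((Fin.snoc hist y : Fin (k + 2) → ℕ) (Fin.last (k + 1)))
      else 0) = _
    rw [show ((Fin.snoc hist y : Fin (k + 2) → ℕ) (Fin.last (k + 1))) = y from
        Fin.snoc_last _ _, hQsnoc hist y]
    by_cases h1 : aliveP Bad x hist <;> by_cases h2 : Bad y <;>
      simp [snoc_alive_iff, h1, h2] <;> ring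
  have hE : ES P M Bad x (k + 1)
      = ∑' hist : Fin (k + 1) → ℕ, (if aliveP Bad x hist then P (cylSet M k hist) else 0)
          * ∑' y : ℕ, (if Bad y then pE (hist (Fin.last k)) y else 0) := by
    rw [ES, ← Equiv.tsum_eq (snocEquiv k), ENNReal.tsum_prod']
    congr 1; funext hist
    rw [← ENNReal.tsum_mul_left]
    congr 1; funext y
    show (if exitP Bad x (Fin.snoc hist y : Fin (k + 2) → ℕ) then
        P (cylSet M (k + 1) (Fin.snoc hist y)) else 0) = _
    rw [hQsnoc hist y]
    by_cases h1 : aliveP Bad x hist <;> by_cases h2 : Bad y <;>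
      simp [snoc_exit_iff, h1, h2] <;> ring
  rw [hA, hE]
  rw [← ENNReal.tsum_mul_left (a := aE), ← ENNReal.tsum_add]
  have hbound : ∀ hist : Fin (k + 1) → ℕ,
      (if aliveP Bad x hist then P (cylSet M k hist) else 0)
          * (∑' y : ℕ, (if Bad y then 0 else pE (hist (Fin.last k)) y * WE y))
        + aE * ((if aliveP Bad x hist then P (cylSet M k hist) else 0)
          * (∑' y : ℕ, (if Bad y then pE (hist (Fin.last k)) y else 0)))
      ≤ (if aliveP Bad x hist then P (cylSet M k hist) * WE (hist (Fin.last k)) else 0)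
        + v2E * (if aliveP Bad x hist then P (cylSet M k hist) else 0) := by
    intro hist
    set l := hist (Fin.last k)
    set Q := P (cylSet M k hist)
    by_cases h1 : aliveP Bad x hist
    · simp only [h1, if_pos]
      have hinner : (∑' y : ℕ, (if Bad y then 0 else pE l y * WE y))
          + aE * (∑' y : ℕ, (if Bad y then pE l y else 0)) ≤ WE l + v2E := by
        rw [← ENNReal.tsum_mul_left, ← ENNReal.tsum_add]
        calc (∑' y : ℕ, ((if Bad y then 0 else pE l y * WE y) + aE * (if Bad y then pE l y else 0)))
            ≤ ∑' y : ℕ, pE l y * WE y := by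
              refine ENNReal.tsum_le_tsum fun y => ?_
              by_cases h2 : Bad y
              · simp only [h2, if_pos, if_neg, zero_add, ite_true, ite_false]
                rw [mul_comm aE (pE l y)]
                exact mul_le_mul_right (hbadW y h2) _
              · simp [h2]
          _ ≤ WE l + v2E := hkey l
      calc Q * (∑' y : ℕ, (if Bad y then 0 else pE l y * WE y))
            + aE * (Q * (∑' y : ℕ, (if Bad y then pE l y else 0)))
          = Q * ((∑' y : ℕ, (if Bad y then 0 else pE l y * WE y))
              + aE * (∑' y : ℕ, (if Bad y then pE l y else 0))) := by ring
        _ ≤ Q * (WE l + v2E) := mul_le_mul_right hinner Q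
        _ = Q * WE l + v2E * Q := by ring
    · simp [h1]
  calc (∑' hist : Fin (k + 1) → ℕ, ((if aliveP Bad x hist then P (cylSet M k hist) else 0)
          * (∑' y : ℕ, (if Bad y then 0 else pE (hist (Fin.last k)) y * WE y))
        + aE * ((if aliveP Bad x hist then P (cylSet M k hist) else 0)
          * (∑' y : ℕ, (if Bad y then pE (hist (Fin.last k)) y else 0)))))
      ≤ ∑' hist : Fin (k + 1) → ℕ,
          ((if aliveP Bad x hist then P (cylSet M k hist) * WE (hist (Fin.last k)) else 0)
            + v2E * (if aliveP Bad x hist then P (cylSet M k hist) else 0)) :=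
        ENNReal.tsum_le_tsum hbound
    _ = AS P M WE Bad x k + v2E * MS P M Bad x k := by
        rw [ENNReal.tsum_add, ENNReal.tsum_mul_left]; rfl


lemma MS_le_one (P : Measure Ω) [IsProbabilityMeasure P] (M : ℕ → Ω → ℕ)
    (hM : ∀ k, Measurable (M k)) (Bad : ℕ → Prop) (x : ℕ) (k : ℕ) :
    MS P M Bad x k ≤ 1 := by
  classical
  calc MS P M Bad x k
      = ∑' hist : Fin (k + 1) → ℕ, (if aliveP Bad x hist then P (cylSet M k hist) else 0) := rfl
    _ ≤ ∑' hist : Fin (k + 1) → ℕ, P (cylSet M k hist) := by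
        refine ENNReal.tsum_le_tsum fun hist => ?_
        split <;> simp
    _ = P (⋃ hist : Fin (k + 1) → ℕ, cylSet M k hist) :=
        (measure_iUnion (cylSet_disjoint M k) (fun h => cylSet_measurable hM k h)).symm
    _ ≤ 1 := prob_le_one

lemma AS_zero (P : Measure Ω) (M : ℕ → Ω → ℕ) (WE : ℕ → ℝ≥0∞) (Bad : ℕ → Prop) (x : ℕ)
    (hWx : WE x = 0) : AS P M WE Bad x 0 = 0 := by
  classical
  rw [AS]
  refine ENNReal.tsum_eq_zero.mpr fun hist => ?_
  split
  · rename_i halive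
    have h0 : hist (Fin.last 0) = x := halive.1
    rw [h0, hWx, mul_zero]
  · rfl

lemma ES_zero (P : Measure Ω) (M : ℕ → Ω → ℕ) (Bad : ℕ → Prop) (x : ℕ)
    (hx : ¬ Bad x) : ES P M Bad x 0 = 0 := by
  classical
  rw [ES]
  refine ENNReal.tsum_eq_zero.mpr fun hist => ?_
  split
  · rename_i hexit
    exact absurd (hexit.1 ▸ hexit.2.2) hx
  · rfl

lemma cume (P : Measure Ω) [IsProbabilityMeasure P] (M : ℕ → Ω → ℕ)
    (hM : ∀ k, Measurable (M k)) (pE : ℕ → ℕ → ℝ≥0∞) (WE : ℕ → ℝ≥0∞)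
    (Bad : ℕ → Prop) (x : ℕ) (aE v2E : ℝ≥0∞)
    (hkey : ∀ l, (∑' z : ℕ, pE l z * WE z) ≤ WE l + v2E)
    (hbadW : ∀ y, Bad y → aE ≤ WE y)
    (hx : ¬ Bad x) (hWx : WE x = 0)
    (hMarkov : ∀ (k : ℕ) (hist : Fin (k + 1) → ℕ) (y : ℕ),
      P {ω | (∀ i : Fin (k + 1), M i.val ω = hist i) ∧ M (k + 1) ω = y}
        = pE (hist (Fin.last k)) y * P {ω | ∀ i : Fin (k + 1), M i.val ω = hist i}) :
    ∀ k : ℕ, AS P M WE Bad x k + aE * (∑ j ∈ Finset.range (k + 1), ES P M Bad x j)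
      ≤ (k : ℝ≥0∞) * v2E := by
  intro k
  induction k with
  | zero =>
      simp [AS_zero P M WE Bad x hWx, ES_zero P M Bad x hx]
  | succ k ih =>
      have hstep := step_ineq P M pE WE Bad x aE v2E hkey hbadW hMarkov k
      have hms := MS_le_one P M hM Bad x k
      calc AS P M WE Bad x (k + 1)
            + aE * (∑ j ∈ Finset.range (k + 2), ES P M Bad x j)
          = (AS P M WE Bad x (k + 1) + aE * ES P M Bad x (k + 1))
            + aE * (∑ j ∈ Finset.range (k + 1), ES P M Bad x j) := by
            rw [Finset.sum_range_succ]; ring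
        _ ≤ (AS P M WE Bad x k + v2E * MS P M Bad x k)
            + aE * (∑ j ∈ Finset.range (k + 1), ES P M Bad x j) := add_le_add_left hstep _
        _ = (AS P M WE Bad x k + aE * (∑ j ∈ Finset.range (k + 1), ES P M Bad x j))
            + v2E * MS P M Bad x k := by ring
        _ ≤ (k : ℝ≥0∞) * v2E + v2E * 1 := by
            exact add_le_add ih (mul_le_mul_right hms v2E)
        _ = ((k : ℝ≥0∞) + 1) * v2E := by ring
        _ = ((k + 1 : ℕ) : ℝ≥0∞) * v2E := by push_cast; ring

lemma event_le_sum (P : Measure Ω) (M : ℕ → Ω → ℕ) (hM : ∀ k, Measurable (M k))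
    (Bad : ℕ → Prop) (x : ℕ) (hM0 : ∀ ω, M 0 ω = x) (n : ℕ) :
    P {ω | ∃ k : ℕ, k ≤ n ∧ Bad (M k ω)}
      ≤ ∑ j ∈ Finset.range (n + 1), ES P M Bad x j := by
  classical
  have hsub : {ω | ∃ k : ℕ, k ≤ n ∧ Bad (M k ω)}
      ⊆ ⋃ (j : Fin (n + 1)),
          ⋃ (hist : ↥{hh : Fin ((j : ℕ) + 1) → ℕ | exitP Bad x hh}),
            cylSet M (j : ℕ) hist.val := by
    rintro ω ⟨k, hk, hbadk⟩
    have hex : ∃ j : ℕ, Bad (M j ω) := ⟨k, hbadk⟩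
    set k₀ := Nat.find hex with hk₀
    have hk₀le : k₀ ≤ k := Nat.find_min' hex hbadk
    refine Set.mem_iUnion.2 ⟨⟨k₀, by omega⟩, ?_⟩
    refine Set.mem_iUnion.2 ⟨⟨fun i : Fin (k₀ + 1) => M i.val ω, Set.mem_setOf.mpr ?_⟩, ?_⟩
    · refine ⟨hM0 ω, fun i hi => Nat.find_min hex hi, ?_⟩
      show Bad (M ((Fin.last k₀ : Fin (k₀ + 1)) : ℕ) ω)
      simpa using Nat.find_spec hex
    · intro i; rfl
  calc P {ω | ∃ k : ℕ, k ≤ n ∧ Bad (M k ω)}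
      ≤ P (⋃ (j : Fin (n + 1)),
          ⋃ (hist : ↥{hh : Fin ((j : ℕ) + 1) → ℕ | exitP Bad x hh}),
            cylSet M (j : ℕ) hist.val) := measure_mono hsub
    _ ≤ ∑' j : Fin (n + 1), P (⋃ (hist : ↥{hh : Fin ((j : ℕ) + 1) → ℕ | exitP Bad x hh}),
            cylSet M (j : ℕ) hist.val) := measure_iUnion_le _
    _ ≤ ∑' j : Fin (n + 1), ES P M Bad x (j : ℕ) := by
        refine ENNReal.tsum_le_tsum fun j => ?_
        calc P (⋃ (hist : ↥{hh : Fin ((j : ℕ) + 1) → ℕ | exitP Bad x hh}),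
              cylSet M (j : ℕ) hist.val)
            ≤ ∑' hist : ↥{hh : Fin ((j : ℕ) + 1) → ℕ | exitP Bad x hh},
                P (cylSet M (j : ℕ) hist.val) := measure_iUnion_le _
          _ = ES P M Bad x (j : ℕ) := by
              have hES : ES P M Bad x (j : ℕ) = ∑' hist : Fin ((j : ℕ) + 1) → ℕ,
                  (if exitP Bad x hist then P (cylSet M (j : ℕ) hist) else 0) := rfl
              rw [hES, tsum_subtype {hh : Fin ((j : ℕ) + 1) → ℕ | exitP Bad x hh}
                  (fun hh => P (cylSet M (j : ℕ) hh))]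
              refine tsum_congr fun hist => ?_
              by_cases hh : exitP Bad x hist <;>
                simp [Set.indicator_apply, hh]
    _ = ∑ j ∈ Finset.range (n + 1), ES P M Bad x j := by
        rw [tsum_fintype]
        exact Fin.sum_univ_eq_sum_range (fun j => ES P M Bad x j) (n + 1)

lemma prob_bound (P : Measure Ω) [IsProbabilityMeasure P]
    (pE : ℕ → ℕ → ℝ≥0∞) (WE : ℕ → ℝ≥0∞) (v2E aE : ℝ≥0∞)
    (haE0 : aE ≠ 0) (haEtop : aE ≠ ⊤)
    (Bad : ℕ → Prop)
    (hkey : ∀ l, (∑' z : ℕ, pE l z * WE z) ≤ WE l + v2E)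
    (hbadW : ∀ y, Bad y → aE ≤ WE y)
    (x : ℕ) (hx : ¬ Bad x) (hWx : WE x = 0)
    (M : ℕ → Ω → ℕ) (hM : ∀ k, Measurable (M k)) (hM0 : ∀ ω, M 0 ω = x)
    (hMarkov : ∀ (k : ℕ) (hist : Fin (k + 1) → ℕ) (y : ℕ),
      P {ω | (∀ i : Fin (k + 1), M i.val ω = hist i) ∧ M (k + 1) ω = y}
        = pE (hist (Fin.last k)) y * P {ω | ∀ i : Fin (k + 1), M i.val ω = hist i})
    (n : ℕ) :
    P {ω | ∃ k : ℕ, k ≤ n ∧ Bad (M k ω)} ≤ (n : ℝ≥0∞) * v2E / aE := by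
  have h1 := cume P M hM pE WE Bad x aE v2E hkey hbadW hx hWx hMarkov n
  have h2 := event_le_sum P M hM Bad x hM0 n
  rw [ENNReal.le_div_iff_mul_le (Or.inl haE0) (Or.inl haEtop)]
  calc P {ω | ∃ k : ℕ, k ≤ n ∧ Bad (M k ω)} * aE
      ≤ (∑ j ∈ Finset.range (n + 1), ES P M Bad x j) * aE := mul_le_mul_left h2 _
    _ = aE * (∑ j ∈ Finset.range (n + 1), ES P M Bad x j) := mul_comm _ _
    _ ≤ AS P M WE Bad x n + aE * (∑ j ∈ Finset.range (n + 1), ES P M Bad x j) := le_add_self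
    _ ≤ (n : ℝ≥0∞) * v2E := h1


end LogisticAux

open LogisticAux
open scoped ENNReal

/-- Lemma (maximal deviation inequality for the embedded chain of the logistic
branching process). Let `p N` be the transition kernel of the embedded jump chain of
the logistic branching process, and let `η > 0` be such that (for large `N`) the
one-step mean displacement `Σ_y p_N(x,y)(y − x)` points towards `μ_N` outside the
window `[μ_N − η σ_N, μ_N + η σ_N]`. Then for `λ > 2η` and `η' > λ` there is `N₀`
such that for all `N ≥ N₀`, every starting state
`x ∈ [μ_N − λ σ_N, μ_N + λ σ_N] ∩ ℕ` and every `n`, any discrete-time Markov chain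
`M` with kernel `p N` started at `x` satisfies
`P(max_{0 ≤ k ≤ n} |M_k − μ_N| > η' σ_N) ≤ (2 v² / (η' − λ)²) · n / σ_N²`. -/
theorem logistic_embedded_maximal_deviation
    (π : ℕ → ℝ) (hπ0 : π 0 = 0) (hπnn : ∀ j, 0 ≤ π j) (hπsum : ∑' j : ℕ, π j = 1)
    (πbar v2 : ℝ)
    (hmean : HasSum (fun j : ℕ => (j : ℝ) * π j) πbar)
    (hsecond : HasSum (fun j : ℕ => (j : ℝ) ^ 2 * π j) v2)
    (hthird : Summable (fun j : ℕ => (j : ℝ) ^ 3 * π j))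
    (ρ d c : ℕ → ℝ) (h : ℕ → ℕ → ℝ)
    (hρ : ∀ N, 0 < ρ N) (hd : ∀ N, 0 ≤ d N) (hc : ∀ N, 0 < c N)
    (hhpos : ∀ N k, 0 < h N k) (hhbdd : ∀ N, ∃ M : ℝ, ∀ k, h N k ≤ M)
    (μ σ : ℕ → ℝ)
    (hμ : ∀ N, μ N = πbar * ρ N / c N) (hσ : ∀ N, σ N = Real.sqrt (μ N))
    (hρ0 : Tendsto ρ atTop (nhds 0))
    (hρc : Tendsto (fun N => ρ N / c N) atTop atTop)
    (hdc : Tendsto (fun N => d N / c N) atTop (nhds 0))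
    (hh : ∃ C : ℝ, ∃ ε : ℕ → ℝ, Tendsto ε atTop (nhds 0) ∧
      ∀ N k, |h N k - 1| ≤ C * ε N * |(k : ℝ) - μ N| / μ N)
    -- the transition kernel of the embedded jump chain:
    (p : ℕ → ℕ → ℕ → ℝ)
    (hp00 : ∀ N, p N 0 0 = 1) (hp0 : ∀ N y, y ≠ 0 → p N 0 y = 0)
    (hpup : ∀ N x y : ℕ, 1 ≤ x → x < y →
      p N x y = ρ N * x * h N x * π (y - x)
        / ((x : ℝ) * (d N + ρ N * h N x + c N * ((x : ℝ) - 1))))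
    (hpdown : ∀ N x : ℕ, 1 ≤ x →
      p N x (x - 1) = (d N * x + c N * x * ((x : ℝ) - 1))
        / ((x : ℝ) * (d N + ρ N * h N x + c N * ((x : ℝ) - 1))))
    (hpzero : ∀ N x y : ℕ, 1 ≤ x → y ≠ x - 1 → ¬ x < y → p N x y = 0)
    -- η from the drift-sign lemma:
    (η : ℝ) (hη : 0 < η) (N₁ : ℕ)
    (hdrift : ∀ N : ℕ, N₁ ≤ N →
      (∀ x : ℕ, μ N + η * σ N ≤ (x : ℝ) → (∑' y : ℕ, p N x y * ((y : ℝ) - x)) < 0) ∧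
      (∀ x : ℕ, 1 ≤ x → (x : ℝ) ≤ μ N - η * σ N →
        0 < ∑' y : ℕ, p N x y * ((y : ℝ) - x)))
    (lam η' : ℝ) (hlam : 2 * η < lam) (hη' : lam < η') :
    ∃ N₀ : ℕ, ∀ N : ℕ, N₀ ≤ N →
      ∀ x : ℕ, μ N - lam * σ N ≤ (x : ℝ) → (x : ℝ) ≤ μ N + lam * σ N →
      ∀ n : ℕ,
      ∀ (Ω : Type) (mΩ : MeasurableSpace Ω) (P : Measure Ω),
        IsProbabilityMeasure P →
        ∀ M : ℕ → Ω → ℕ, (∀ k, Measurable (M k)) → (∀ ω, M 0 ω = x) →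
        (∀ (k : ℕ) (hist : Fin (k + 1) → ℕ) (y : ℕ),
          P {ω | (∀ i : Fin (k + 1), M i.val ω = hist i) ∧ M (k + 1) ω = y}
            = ENNReal.ofReal (p N (hist (Fin.last k)) y)
              * P {ω | ∀ i : Fin (k + 1), M i.val ω = hist i}) →
        (P {ω | ∃ k : ℕ, k ≤ n ∧ η' * σ N < |(M k ω : ℝ) - μ N|}).toReal
          ≤ (2 * v2 / (η' - lam) ^ 2) * n / (σ N) ^ 2 := by
  classical
  -- basic facts about π and moments
  have hπs : Summable π := by
    by_contra hcon
    rw [tsum_eq_zero_of_not_summable hcon] at hπsum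
    norm_num at hπsum
  have hπhs : HasSum π 1 := hπsum ▸ hπs.hasSum
  have hπshift : HasSum (fun j : ℕ => π (j + 1)) 1 := by
    refine (hasSum_nat_add_iff 1).mpr ?_
    simpa [hπ0] using hπhs
  have hmeanshift : HasSum (fun j : ℕ => π (j + 1) * ((j : ℝ) + 1)) πbar := by
    have h2 := (hasSum_nat_add_iff (f := fun j : ℕ => (j : ℝ) * π j) 1).mpr
      (by simpa [hπ0] using hmean)
    have hfe : (fun j : ℕ => ((j + 1 : ℕ) : ℝ) * π (j + 1))
        = fun j : ℕ => π (j + 1) * ((j : ℝ) + 1) := by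
      funext j; push_cast; ring
    rwa [hfe] at h2
  have hsecshift : HasSum (fun j : ℕ => π (j + 1) * ((j : ℝ) + 1) ^ 2) v2 := by
    have h2 := (hasSum_nat_add_iff (f := fun j : ℕ => (j : ℝ) ^ 2 * π j) 1).mpr
      (by simpa [hπ0] using hsecond)
    have hfe : (fun j : ℕ => ((j + 1 : ℕ) : ℝ) ^ 2 * π (j + 1))
        = fun j : ℕ => π (j + 1) * ((j : ℝ) + 1) ^ 2 := by
      funext j; push_cast; ring
    rwa [hfe] at h2
  have hπbar1 : (1 : ℝ) ≤ πbar := by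
    refine hasSum_le (fun j => ?_) hπhs hmean
    rcases Nat.eq_zero_or_pos j with hj | hj
    · simp [hj, hπ0]
    · have h1j : (1 : ℝ) ≤ (j : ℝ) := by exact_mod_cast hj
      nlinarith [hπnn j]
  have hv2bar : πbar ≤ v2 := by
    refine hasSum_le (fun j => ?_) hmean hsecond
    rcases Nat.eq_zero_or_pos j with hj | hj
    · simp [hj, hπ0]
    · have h1j : (1 : ℝ) ≤ (j : ℝ) := by exact_mod_cast hj
      have h2j := mul_nonneg (by nlinarith : (0 : ℝ) ≤ (j : ℝ) ^ 2 - (j : ℝ)) (hπnn j)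
      nlinarith
  have hv21 : (1 : ℝ) ≤ v2 := le_trans hπbar1 hv2bar
  have hμpos : ∀ N, 0 < μ N := fun N => by
    rw [hμ N]; exact div_pos (mul_pos (by linarith) (hρ N)) (hc N)
  have hσpos : ∀ N, 0 < σ N := fun N => by
    rw [hσ N]; exact Real.sqrt_pos.mpr (hμpos N)
  have hlam0 : 0 < lam := by linarith
  have hηlam : η < lam := by linarith
  -- nonnegativity of the kernel
  have hpnn : ∀ N l z, 0 ≤ p N l z := by
    intro N l z
    rcases Nat.eq_zero_or_pos l with hl | hl
    · subst hl
      rcases Nat.eq_zero_or_pos z with hz | hz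
      · subst hz; rw [hp00]; norm_num
      · rw [hp0 N z (by omega)]
    · have hl0 : (0 : ℝ) < (l : ℝ) := by exact_mod_cast hl
      have hl1 : (1 : ℝ) ≤ (l : ℝ) := by exact_mod_cast hl
      have hD : 0 < d N + ρ N * h N l + c N * ((l : ℝ) - 1) := by
        have h1 := mul_pos (hρ N) (hhpos N l)
        have h2 := mul_nonneg (hc N).le (by linarith : (0 : ℝ) ≤ (l : ℝ) - 1)
        have h3 := hd N
        linarith
      by_cases hz1 : z = l - 1
      · subst hz1
        rw [hpdown N l hl]
        apply div_nonneg
        · have e1 : 0 ≤ d N * (l : ℝ) := mul_nonneg (hd N) hl0.le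
          have e2 : 0 ≤ c N * (l : ℝ) * ((l : ℝ) - 1) :=
            mul_nonneg (mul_nonneg (hc N).le hl0.le) (by linarith)
          linarith
        · positivity
      · by_cases hz2 : l < z
        · rw [hpup N l z hl hz2]
          apply div_nonneg
          · have := (hρ N).le
            have := (hhpos N l).le
            have := hπnn (z - l)
            positivity
          · positivity
        · rw [hpzero N l z hl hz1 hz2]
  refine ⟨N₁, fun N hN x hx1 hx2 n Ω mΩ P hP M hMmeas hM00 hMark => ?_⟩
  letI := mΩ
  haveI := hP
  have hs0 : 0 < σ N := hσpos N
  have hlsnn : 0 ≤ lam * σ N := mul_nonneg hlam0.le hs0.le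
  -- the Lyapunov function
  set W : ℕ → ℝ := WF (μ N) (lam * σ N) with hWdef
  have hWnn : ∀ z, 0 ≤ W z := fun z => WF_nonneg _ _ z
  -- real key inequality
  have hkeyreal : ∀ l : ℕ,
      Summable (fun z : ℕ => p N l z * W z) ∧ (∑' z : ℕ, p N l z * W z) ≤ W l + v2 := by
    intro l
    rcases Nat.eq_zero_or_pos l with hl | hl
    · subst hl
      have hsingle : HasSum (fun z : ℕ => p N 0 z * W z) (p N 0 0 * W 0) :=
        hasSum_single 0 (fun b' hb' => by rw [hp0 N b' hb', zero_mul])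
      refine ⟨hsingle.summable, ?_⟩
      rw [hsingle.tsum_eq, hp00 N, one_mul]
      linarith
    · have hl0 : (0 : ℝ) < (l : ℝ) := by exact_mod_cast hl
      have hl1 : (1 : ℝ) ≤ (l : ℝ) := by exact_mod_cast hl
      have hD : 0 < d N + ρ N * h N l + c N * ((l : ℝ) - 1) := by
        have h1 := mul_pos (hρ N) (hhpos N l)
        have h2 := mul_nonneg (hc N).le (by linarith : (0 : ℝ) ≤ (l : ℝ) - 1)
        have h3 := hd N
        linarith
      set q : ℝ := (d N * (l : ℝ) + c N * (l : ℝ) * ((l : ℝ) - 1))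
          / ((l : ℝ) * (d N + ρ N * h N l + c N * ((l : ℝ) - 1))) with hqdef
      set r : ℝ := ρ N * (l : ℝ) * h N l
          / ((l : ℝ) * (d N + ρ N * h N l + c N * ((l : ℝ) - 1))) with hrdef
      have hq0 : 0 ≤ q := by
        rw [hqdef]
        apply div_nonneg
        · have e1 : 0 ≤ d N * (l : ℝ) := mul_nonneg (hd N) hl0.le
          have e2 : 0 ≤ c N * (l : ℝ) * ((l : ℝ) - 1) :=
            mul_nonneg (mul_nonneg (hc N).le hl0.le) (by linarith)
          linarith
        · positivity
      have hr0 : 0 ≤ r := by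
        rw [hrdef]
        apply div_nonneg
        · have := (hρ N).le
          have := (hhpos N l).le
          positivity
        · positivity
      have hqr : q + r = 1 := by
        rw [hqdef, hrdef, ← add_div,
          div_eq_one_iff_eq (ne_of_gt (mul_pos hl0 hD))]
        ring
      have hdown' : p N l (l - 1) = q := by rw [hpdown N l hl, hqdef]
      have hup' : ∀ j : ℕ, p N l (l + 1 + j) = r * π (j + 1) := by
        intro j
        rw [hpup N l (l + 1 + j) hl (by omega)]
        have hsub : l + 1 + j - l = j + 1 := by omega
        rw [hsub, hrdef]
        ring
      have hother' : ∀ z : ℕ, z ≠ l - 1 → ¬ l < z → p N l z = 0 := fun z => hpzero N l z hl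
      have hcast : ((l - 1 : ℕ) : ℝ) = (l : ℝ) - 1 := by
        have h1 : (1 : ℕ) ≤ l := hl
        push_cast [h1]
        ring
      have hone : HasSum (fun z : ℕ => p N l z) 1 := by
        have hb : HasSum (fun j : ℕ => π (j + 1) * (fun _ : ℕ => (1 : ℝ)) (l + 1 + j)) 1 := by
          simpa using hπshift
        have hm := master_hasSum (p N l) π l q r hdown' hup' hother' (fun _ => 1) 1 hb
        have hval : q * (fun _ : ℕ => (1 : ℝ)) (l - 1) + r * 1 = 1 := by
          simp only []
          linarith [hqr]
        rw [hval] at hm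
        simpa using hm
      have hZ : HasSum (fun z : ℕ => p N l z * ((z : ℝ) - l)) (q * (-1) + r * πbar) := by
        have hb : HasSum (fun j : ℕ => π (j + 1) * (((l + 1 + j : ℕ) : ℝ) - l)) πbar := by
          have hfe : (fun j : ℕ => π (j + 1) * (((l + 1 + j : ℕ) : ℝ) - l))
              = fun j : ℕ => π (j + 1) * ((j : ℝ) + 1) := by
            funext j; push_cast; ring
          rw [hfe]; exact hmeanshift
        have hm := master_hasSum (p N l) π l q r hdown' hup' hother'
          (fun z : ℕ => (z : ℝ) - l) πbar hb
        have hval : (((l - 1 : ℕ) : ℝ) - (l : ℝ)) = -1 := by rw [hcast]; ring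
        simp only [hval] at hm
        exact hm
      have hQ2 : HasSum (fun z : ℕ => p N l z * ((z : ℝ) - l) ^ 2) (q * 1 + r * v2) := by
        have hb : HasSum (fun j : ℕ => π (j + 1) * ((((l + 1 + j : ℕ) : ℝ) - l)) ^ 2) v2 := by
          have hfe : (fun j : ℕ => π (j + 1) * ((((l + 1 + j : ℕ) : ℝ) - l)) ^ 2)
              = fun j : ℕ => π (j + 1) * ((j : ℝ) + 1) ^ 2 := by
            funext j; push_cast; ring
          rw [hfe]; exact hsecshift
        have hm := master_hasSum (p N l) π l q r hdown' hup' hother'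
          (fun z : ℕ => ((z : ℝ) - l) ^ 2) v2 hb
        have hval : (((l - 1 : ℕ) : ℝ) - (l : ℝ)) ^ 2 = 1 := by rw [hcast]; ring
        simp only [hval] at hm
        exact hm
      have hS2 : q * 1 + r * v2 ≤ v2 := by nlinarith
      -- three position cases
      by_cases hA : μ N + lam * σ N < (l : ℝ)
      · -- above the window
        have hg0 : 0 ≤ (l : ℝ) - μ N - lam * σ N := by linarith
        have hWl : W l = ((l : ℝ) - μ N - lam * σ N) ^ 2 := WF_above _ _ hlsnn l hg0
        have hWb : ∀ z : ℕ, W z ≤ W l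
            + (2 * ((l : ℝ) - μ N - lam * σ N)) * ((z : ℝ) - l) + ((z : ℝ) - l) ^ 2 := by
          intro z
          have habs : |(z : ℝ) - μ N| ≤ |(z : ℝ) - (μ N + lam * σ N)| + lam * σ N := by
            calc |(z : ℝ) - μ N| = |((z : ℝ) - (μ N + lam * σ N)) + lam * σ N| := by ring_nf
              _ ≤ |(z : ℝ) - (μ N + lam * σ N)| + |lam * σ N| := abs_add_le _ _
              _ = |(z : ℝ) - (μ N + lam * σ N)| + lam * σ N := by rw [abs_of_nonneg hlsnn]
          have h2 := WF_le (μ N) (lam * σ N) z (μ N + lam * σ N) (by linarith)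
          have h3 : ((z : ℝ) - (μ N + lam * σ N)) ^ 2
              = W l + (2 * ((l : ℝ) - μ N - lam * σ N)) * ((z : ℝ) - l) + ((z : ℝ) - l) ^ 2 := by
            rw [hWl]; ring
          rw [hWdef] at h3 ⊢
          linarith
        have hdr : (q * (-1) + r * πbar) < 0 := by
          have hcond : μ N + η * σ N ≤ (l : ℝ) := by nlinarith [hs0]
          have hd2 := (hdrift N hN).1 l hcond
          rwa [hZ.tsum_eq] at hd2
        exact key_core (p N l) W l v2 _ _ _ (hpnn N l) hWnn hone hZ hQ2 hS2
          (by nlinarith) hWb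
      · by_cases hB : (l : ℝ) < μ N - lam * σ N
        · -- below the window
          have hg0 : 0 ≤ μ N - lam * σ N - (l : ℝ) := by linarith
          have hWl : W l = (μ N - lam * σ N - (l : ℝ)) ^ 2 := WF_below _ _ hlsnn l hg0
          have hWb : ∀ z : ℕ, W z ≤ W l
              + (-(2 * (μ N - lam * σ N - (l : ℝ)))) * ((z : ℝ) - l) + ((z : ℝ) - l) ^ 2 := by
            intro z
            have habs : |(z : ℝ) - μ N| ≤ |(z : ℝ) - (μ N - lam * σ N)| + lam * σ N := by
              calc |(z : ℝ) - μ N| = |((z : ℝ) - (μ N - lam * σ N)) + -(lam * σ N)| := by ring_nf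
                _ ≤ |(z : ℝ) - (μ N - lam * σ N)| + |-(lam * σ N)| := abs_add_le _ _
                _ = |(z : ℝ) - (μ N - lam * σ N)| + lam * σ N := by
                    rw [abs_neg, abs_of_nonneg hlsnn]
            have h2 := WF_le (μ N) (lam * σ N) z (μ N - lam * σ N) (by linarith)
            have h3 : ((z : ℝ) - (μ N - lam * σ N)) ^ 2
                = W l + (-(2 * (μ N - lam * σ N - (l : ℝ)))) * ((z : ℝ) - l)
                  + ((z : ℝ) - l) ^ 2 := by
              rw [hWl]; ring
            rw [hWdef] at h3 ⊢
            linarith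
          have hdr : 0 < (q * (-1) + r * πbar) := by
            have hcond : (l : ℝ) ≤ μ N - η * σ N := by nlinarith [hs0]
            have hd2 := (hdrift N hN).2 l hl hcond
            rwa [hZ.tsum_eq] at hd2
          exact key_core (p N l) W l v2 _ _ _ (hpnn N l) hWnn hone hZ hQ2 hS2
            (by nlinarith) hWb
        · -- inside the window
          have habs : |(l : ℝ) - μ N| ≤ lam * σ N := by
            rw [abs_le]; constructor <;> push_neg at hA hB <;> [linarith; linarith]
          have hWb : ∀ z : ℕ, W z ≤ W l + 0 * ((z : ℝ) - l) + ((z : ℝ) - l) ^ 2 := by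
            intro z
            have ht : |(z : ℝ) - μ N| ≤ |(z : ℝ) - (l : ℝ)| + lam * σ N := by
              calc |(z : ℝ) - μ N| ≤ |(z : ℝ) - (l : ℝ)| + |(l : ℝ) - μ N| :=
                    abs_sub_le _ _ _
                _ ≤ |(z : ℝ) - (l : ℝ)| + lam * σ N := by linarith
            have h2 := WF_le (μ N) (lam * σ N) z (l : ℝ) (by linarith)
            have h4 := hWnn l
            rw [hWdef] at h4 ⊢
            linarith
          exact key_core (p N l) W l v2 _ _ _ (hpnn N l) hWnn hone hZ hQ2 hS2
            (by simp) hWb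
  -- transfer to ℝ≥0∞
  have hkeyE : ∀ l : ℕ,
      (∑' z : ℕ, ENNReal.ofReal (p N l z) * ENNReal.ofReal (W z))
        ≤ ENNReal.ofReal (W l) + ENNReal.ofReal v2 := by
    intro l
    obtain ⟨hsumm, hle⟩ := hkeyreal l
    calc (∑' z : ℕ, ENNReal.ofReal (p N l z) * ENNReal.ofReal (W z))
        = ∑' z : ℕ, ENNReal.ofReal (p N l z * W z) := by
          refine tsum_congr fun z => ?_
          rw [ENNReal.ofReal_mul (hpnn N l z)]
      _ = ENNReal.ofReal (∑' z : ℕ, p N l z * W z) :=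
          (ENNReal.ofReal_tsum_of_nonneg (fun z => mul_nonneg (hpnn N l z) (hWnn z)) hsumm).symm
      _ ≤ ENNReal.ofReal (W l + v2) := ENNReal.ofReal_le_ofReal hle
      _ = ENNReal.ofReal (W l) + ENNReal.ofReal v2 :=
          ENNReal.ofReal_add (hWnn l) (by linarith)
  -- apply the probabilistic bound
  have hapos : (0 : ℝ) < ((η' - lam) * σ N) ^ 2 := pow_pos (mul_pos (by linarith) hs0) 2
  have hxnotbad : ¬ (η' * σ N < |(x : ℝ) - μ N|) := by
    push_neg
    have habs : |(x : ℝ) - μ N| ≤ lam * σ N := abs_le.mpr ⟨by linarith, by linarith⟩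
    nlinarith [hs0]
  have hWx0 : ENNReal.ofReal (W x) = 0 := by
    rw [hWdef, WF_inside (μ N) (lam * σ N) x (abs_le.mpr ⟨by linarith, by linarith⟩)]
    exact ENNReal.ofReal_zero
  have hbadW : ∀ y : ℕ, (η' * σ N < |(y : ℝ) - μ N|) →
      ENNReal.ofReal (((η' - lam) * σ N) ^ 2) ≤ ENNReal.ofReal (W y) := by
    intro y hy
    apply ENNReal.ofReal_le_ofReal
    rw [hWdef]
    exact WF_ge (μ N) (lam * σ N) y ((η' - lam) * σ N)
      (mul_nonneg (by linarith) hs0.le) (by nlinarith)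
  have hbound := prob_bound P (fun a b => ENNReal.ofReal (p N a b))
    (fun y => ENNReal.ofReal (W y)) (ENNReal.ofReal v2)
    (ENNReal.ofReal (((η' - lam) * σ N) ^ 2))
    (ne_of_gt (ENNReal.ofReal_pos.mpr hapos)) ENNReal.ofReal_ne_top
    (fun y => η' * σ N < |(y : ℝ) - μ N|)
    hkeyE hbadW x hxnotbad hWx0 M hMmeas hM00 hMark n
  have hfin : ((n : ℝ≥0∞) * ENNReal.ofReal v2 / ENNReal.ofReal (((η' - lam) * σ N) ^ 2))
      = ENNReal.ofReal (((n : ℝ) * v2) / ((η' - lam) * σ N) ^ 2) := by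
    rw [ENNReal.ofReal_div_of_pos hapos,
      ENNReal.ofReal_mul (by positivity : (0 : ℝ) ≤ (n : ℝ)), ENNReal.ofReal_natCast]
  have htoReal : (P {ω | ∃ k : ℕ, k ≤ n ∧ η' * σ N < |(M k ω : ℝ) - μ N|}).toReal
      ≤ ((n : ℝ) * v2) / ((η' - lam) * σ N) ^ 2 := by
    apply ENNReal.toReal_le_of_le_ofReal (by positivity)
    rw [← hfin]
    exact hbound
  refine le_trans htoReal ?_
  have hA2 : (0 : ℝ) < (η' - lam) ^ 2 := pow_pos (by linarith) 2
  have hB2 : (0 : ℝ) < σ N ^ 2 := by positivity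
  rw [mul_pow]
  rw [div_le_iff₀ (mul_pos hA2 hB2)]
  have hrhs : 2 * v2 / (η' - lam) ^ 2 * (n : ℝ) / σ N ^ 2 * ((η' - lam) ^ 2 * σ N ^ 2)
      = 2 * v2 * (n : ℝ) := by
    field_simp [sub_ne_zero.mpr hη'.ne']
  rw [hrhs]
  nlinarith [Nat.cast_nonneg (α := ℝ) n]
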